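/- Let c₀, c₁ > 0, Θ > 0, β ≥ 0, μ̄ ≥ 0, and let ε, σ : (0,∞)² → ℝ satisfy ε(ρ,θ) ≥ c₀·(ρ^{5/3} + θ⁴) and 0 ≤ σ(ρ,θ) ≤ c₁·(1 + θ³ + ρ + ρ·log⁺θ) for all ρ, θ > 0, where log⁺x := max(0, log x). For ρ, θ > 0, u, B ∈ ℝ³, θ̄ ∈ (0, Θ], B_B ∈ ℝ³ with |B_B| ≤ β, and M̄ ∈ [−μ̄, μ̄], define E := (1/2)ρ|u|² + ε(ρ,θ) + (1/2)|B|² and F := E − θ̄·σ(ρ,θ) − B_B·B − ρ·M̄. Then for every λ > 1 there exist constants C₁, C₂ > 0, depending only on λ, c₀, c₁, Θ, β, μ̄, such that λ^{−1}·E − C₁ ≤ F ≤ λ·E + C₂ for all such ρ, θ, u, B, θ̄, B_B, M̄. -/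

import Mathlib

open Set Filter Topology

/-- Absorption lemma: a lower power is dominated by an arbitrarily small multiple
of a higher power plus a constant. -/
lemma aux1 (p q a K : ℝ) (hp : 0 ≤ p) (hpq : p < q) (ha : 0 < a) (hK : 0 ≤ K) :
    ∃ C : ℝ, 0 < C ∧ ∀ x : ℝ, 0 < x → K * x ^ p ≤ a * x ^ q + C := by
  set M : ℝ := max 1 ((K / a) ^ (1 / (q - p))) with hM
  have hM1 : (1 : ℝ) ≤ M := le_max_left _ _
  have hM0 : (0 : ℝ) < M := lt_of_lt_of_le one_pos hM1
  refine ⟨K * M ^ p + 1, by positivity, ?_⟩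
  intro x hx
  rcases le_total x M with h | h
  · have h1 : x ^ p ≤ M ^ p := Real.rpow_le_rpow hx.le h hp
    have h2 : 0 ≤ a * x ^ q := by positivity
    nlinarith [mul_le_mul_of_nonneg_left h1 hK]
  · have hqp : 0 < q - p := by linarith
    have hxq : x ^ q = x ^ (q - p) * x ^ p := by
      rw [← Real.rpow_add hx]; ring_nf
    have h2 : K / a ≤ x ^ (q - p) := by
      have e1 : ((K / a) ^ (1 / (q - p))) ^ (q - p) = K / a := by
        rw [← Real.rpow_mul (by positivity : (0:ℝ) ≤ K / a), one_div,
          inv_mul_cancel₀ hqp.ne', Real.rpow_one]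
      calc K / a = ((K / a) ^ (1 / (q - p))) ^ (q - p) := e1.symm
        _ ≤ M ^ (q - p) :=
            Real.rpow_le_rpow (Real.rpow_nonneg (by positivity) _) (le_max_right _ _) hqp.le
        _ ≤ x ^ (q - p) := Real.rpow_le_rpow hM0.le h hqp.le
    have hxp : (0 : ℝ) < x ^ p := Real.rpow_pos_of_pos hx p
    have : K * x ^ p ≤ a * x ^ q := by
      rw [hxq]
      have := mul_le_mul_of_nonneg_right h2 hxp.le
      calc K * x ^ p = a * (K / a * x ^ p) := by field_simp
        _ ≤ a * (x ^ (q - p) * x ^ p) := by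
            exact mul_le_mul_of_nonneg_left this ha.le
    have h3 : (0:ℝ) ≤ K * M ^ p := mul_nonneg hK (Real.rpow_nonneg hM0.le p)
    linarith

/-- Two-variable absorption: `K ρ θ` is dominated by small multiples of
`ρ^{5/3}` and `θ⁴` plus a constant. -/
lemma aux2 (a K : ℝ) (ha : 0 < a) (hK : 0 ≤ K) :
    ∃ C : ℝ, 0 < C ∧ ∀ ρ θ : ℝ, 0 < ρ → 0 < θ →
      K * (ρ * θ) ≤ a * ρ ^ ((5 : ℝ) / 3) + a * θ ^ ((4 : ℝ)) + C := by
  set s : ℝ := min 1 ((a / (K + 1)) ^ ((3 : ℝ) / 5)) with hs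
  have hs0 : 0 < s := lt_min one_pos (Real.rpow_pos_of_pos (by positivity) _)
  have hsa : K * s ^ ((5 : ℝ) / 3) ≤ a := by
    have h1 : s ^ ((5:ℝ)/3) ≤ ((a / (K + 1)) ^ ((3:ℝ)/5)) ^ ((5:ℝ)/3) :=
      Real.rpow_le_rpow hs0.le (min_le_right _ _) (by norm_num)
    have h2 : ((a / (K + 1)) ^ ((3:ℝ)/5)) ^ ((5:ℝ)/3) = a / (K + 1) := by
      rw [← Real.rpow_mul (by positivity : (0:ℝ) ≤ a / (K+1))]
      norm_num
    have h3 : s ^ ((5:ℝ)/3) ≤ a / (K + 1) := by rw [← h2]; exact h1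
    have h4 : (0:ℝ) ≤ s ^ ((5:ℝ)/3) := Real.rpow_nonneg hs0.le _
    calc K * s ^ ((5:ℝ)/3) ≤ (K + 1) * (a / (K + 1)) := by
          apply mul_le_mul (by linarith) h3 h4 (by positivity)
      _ = a := by field_simp
  obtain ⟨C, hC, hCle⟩ := aux1 ((5:ℝ)/2) 4 a (K / s ^ ((5:ℝ)/2))
    (by norm_num) (by norm_num) ha (by positivity)
  refine ⟨C, hC, ?_⟩
  intro ρ θ hρ hθ
  have hconj : ((5:ℝ)/3).HolderConjugate ((5:ℝ)/2) := ⟨by norm_num, by norm_num, by norm_num⟩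
  have hY := Real.young_inequality_of_nonneg (a := s * ρ) (b := θ / s)
    (by positivity) (by positivity) hconj
  have hsp : (s * ρ) ^ ((5:ℝ)/3) = s ^ ((5:ℝ)/3) * ρ ^ ((5:ℝ)/3) :=
    Real.mul_rpow hs0.le hρ.le
  have hdp : (θ / s) ^ ((5:ℝ)/2) = θ ^ ((5:ℝ)/2) / s ^ ((5:ℝ)/2) :=
    Real.div_rpow hθ.le hs0.le _
  have hρθ : ρ * θ ≤ s ^ ((5:ℝ)/3) * ρ ^ ((5:ℝ)/3) + θ ^ ((5:ℝ)/2) / s ^ ((5:ℝ)/2) := by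
    have e : s * ρ * (θ / s) = ρ * θ := by field_simp
    rw [e, hsp, hdp] at hY
    have h53 : (0:ℝ) ≤ s ^ ((5:ℝ)/3) * ρ ^ ((5:ℝ)/3) := by
      positivity
    have h52 : (0:ℝ) ≤ θ ^ ((5:ℝ)/2) / s ^ ((5:ℝ)/2) := by
      have := Real.rpow_nonneg hθ.le ((5:ℝ)/2)
      have := Real.rpow_pos_of_pos hs0 ((5:ℝ)/2)
      positivity
    calc ρ * θ ≤ s ^ ((5:ℝ)/3) * ρ ^ ((5:ℝ)/3) / ((5:ℝ)/3)
          + θ ^ ((5:ℝ)/2) / s ^ ((5:ℝ)/2) / ((5:ℝ)/2) := hY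
      _ ≤ s ^ ((5:ℝ)/3) * ρ ^ ((5:ℝ)/3) + θ ^ ((5:ℝ)/2) / s ^ ((5:ℝ)/2) := by
          have a1 : s ^ ((5:ℝ)/3) * ρ ^ ((5:ℝ)/3) / ((5:ℝ)/3)
              ≤ s ^ ((5:ℝ)/3) * ρ ^ ((5:ℝ)/3) := by
            rw [div_le_iff₀ (by norm_num : (0:ℝ) < (5:ℝ)/3)]
            nlinarith [h53]
          have a2 : θ ^ ((5:ℝ)/2) / s ^ ((5:ℝ)/2) / ((5:ℝ)/2)
              ≤ θ ^ ((5:ℝ)/2) / s ^ ((5:ℝ)/2) := by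
            rw [div_le_iff₀ (by norm_num : (0:ℝ) < (5:ℝ)/2)]
            nlinarith [h52]
          linarith
  have hmul := mul_le_mul_of_nonneg_left hρθ hK
  have hterm2 : K * (θ ^ ((5:ℝ)/2) / s ^ ((5:ℝ)/2))
      = (K / s ^ ((5:ℝ)/2)) * θ ^ ((5:ℝ)/2) := by ring
  have hK2 := hCle θ hθ
  have hterm1 : K * (s ^ ((5:ℝ)/3) * ρ ^ ((5:ℝ)/3)) ≤ a * ρ ^ ((5:ℝ)/3) := by
    have := mul_le_mul_of_nonneg_right hsa (Real.rpow_nonneg hρ.le ((5:ℝ)/3))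
    nlinarith [this]
  calc K * (ρ * θ) ≤ K * (s ^ ((5:ℝ)/3) * ρ ^ ((5:ℝ)/3))
        + K * (θ ^ ((5:ℝ)/2) / s ^ ((5:ℝ)/2)) := by linarith [hmul]
    _ ≤ a * ρ ^ ((5:ℝ)/3) + (a * θ ^ ((4:ℝ)) + C) := by
        rw [hterm2]; exact add_le_add hterm1 hK2
    _ = a * ρ ^ ((5:ℝ)/3) + a * θ ^ ((4:ℝ)) + C := by ring

/-- Master perturbation bound. -/
lemma pert (c₀ c₁ Θ β μ : ℝ) (hc₀ : 0 < c₀) (hc₁ : 0 < c₁) (hΘ : 0 < Θ)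
    (hβ : 0 ≤ β) (hμ : 0 ≤ μ) (δ : ℝ) (hδ : 0 < δ) :
    ∃ C : ℝ, 0 < C ∧ ∀ ρ θ x : ℝ, 0 < ρ → 0 < θ → 0 ≤ x →
      Θ * c₁ * (1 + θ ^ 3 + ρ + ρ * θ) + β * x + μ * ρ ≤
        δ * (c₀ * (ρ ^ ((5 : ℝ) / 3) + θ ^ 4) + (1/2) * x ^ 2) + C := by
  have hK : (0:ℝ) ≤ Θ * c₁ := by positivity
  have ha : (0:ℝ) < δ * c₀ / 2 := by positivity
  obtain ⟨Ca, hCa, ha1⟩ := aux1 3 4 (δ * c₀ / 2) (Θ * c₁) (by norm_num) (by norm_num) ha hK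
  obtain ⟨Cb, hCb, hb1⟩ := aux1 1 ((5:ℝ)/3) (δ * c₀ / 2) (Θ * c₁ + μ)
    (by norm_num) (by norm_num) ha (by positivity)
  obtain ⟨Cc, hCc, hc1⟩ := aux2 (δ * c₀ / 2) (Θ * c₁) ha hK
  refine ⟨Ca + Cb + Cc + β ^ 2 / (2 * δ) + 1 + Θ * c₁, by positivity, ?_⟩
  intro ρ θ x hρ hθ hx
  have e3 : θ ^ ((3:ℝ)) = θ ^ (3:ℕ) := by
    rw [← Real.rpow_natCast θ 3]; norm_num
  have e4 : θ ^ ((4:ℝ)) = θ ^ (4:ℕ) := by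
    rw [← Real.rpow_natCast θ 4]; norm_num
  have e1 : ρ ^ ((1:ℝ)) = ρ := Real.rpow_one ρ
  have t1 := ha1 θ hθ
  rw [e3, e4] at t1
  have t2 := hb1 ρ hρ
  rw [e1] at t2
  have t3 := hc1 ρ θ hρ hθ
  rw [e4] at t3
  have t4 : β * x ≤ δ * ((1/2) * x ^ 2) + β ^ 2 / (2 * δ) := by
    have hd : β ^ 2 / (2 * δ) * (2 * δ) = β ^ 2 :=
      div_mul_cancel₀ _ (by positivity)
    nlinarith [sq_nonneg (δ * x - β), hδ, hd]
  nlinarith [t1, t2, t3, t4]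

/-- The pointwise two-sided comparison (AS30) between the total
energy density `E = (1/2)ρ|u|² + ε(ρ,θ) + (1/2)|B|²` and the ballistic free-energy
density `F = E - θ̄ σ(ρ,θ) - B_B·B - ρ M̄`: for every `λ > 1` there are constants
`C₁, C₂ > 0`, depending only on `λ, c₀, c₁, Θ, β, μ̄`, with
`λ⁻¹ E - C₁ ≤ F ≤ λ E + C₂` whenever `ρ, θ > 0`, `θ̄ ∈ (0,Θ]`, `|B_B| ≤ β`,
`|M̄| ≤ μ̄`. -/
theorem stmt18 (c₀ c₁ Θ β μ : ℝ) (hc₀ : 0 < c₀) (hc₁ : 0 < c₁) (hΘ : 0 < Θ)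
    (hβ : 0 ≤ β) (hμ : 0 ≤ μ)
    (ε σ : ℝ → ℝ → ℝ)
    (hε : ∀ ρ θ : ℝ, 0 < ρ → 0 < θ → c₀ * (ρ ^ ((5 : ℝ) / 3) + θ ^ 4) ≤ ε ρ θ)
    (hσ : ∀ ρ θ : ℝ, 0 < ρ → 0 < θ →
      0 ≤ σ ρ θ ∧ σ ρ θ ≤ c₁ * (1 + θ ^ 3 + ρ + ρ * max 0 (Real.log θ))) :
    ∀ lam : ℝ, 1 < lam → ∃ C₁ C₂ : ℝ, 0 < C₁ ∧ 0 < C₂ ∧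
      ∀ (ρ θ θbar Mbar : ℝ) (u B BB : EuclideanSpace ℝ (Fin 3)),
        0 < ρ → 0 < θ → 0 < θbar → θbar ≤ Θ → ‖BB‖ ≤ β → |Mbar| ≤ μ →
        lam⁻¹ * ((1 / 2) * ρ * ‖u‖ ^ 2 + ε ρ θ + (1 / 2) * ‖B‖ ^ 2) - C₁ ≤
            ((1 / 2) * ρ * ‖u‖ ^ 2 + ε ρ θ + (1 / 2) * ‖B‖ ^ 2) -
              θbar * σ ρ θ - (@inner ℝ _ _ BB B) - ρ * Mbar ∧
          ((1 / 2) * ρ * ‖u‖ ^ 2 + ε ρ θ + (1 / 2) * ‖B‖ ^ 2) -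
              θbar * σ ρ θ - (@inner ℝ _ _ BB B) - ρ * Mbar ≤
            lam * ((1 / 2) * ρ * ‖u‖ ^ 2 + ε ρ θ + (1 / 2) * ‖B‖ ^ 2) + C₂ := by
  intro lam hlam
  have hlam0 : (0:ℝ) < lam := by linarith
  have hδ₁ : (0:ℝ) < 1 - lam⁻¹ := by
    have : lam⁻¹ < 1 := inv_lt_one_of_one_lt₀ hlam
    linarith
  have hδ₂ : (0:ℝ) < lam - 1 := by linarith
  obtain ⟨C₁, hC₁, hP₁⟩ := pert c₀ c₁ Θ β μ hc₀ hc₁ hΘ hβ hμ _ hδ₁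
  obtain ⟨C₂, hC₂, hP₂⟩ := pert c₀ c₁ Θ β μ hc₀ hc₁ hΘ hβ hμ _ hδ₂
  refine ⟨C₁, C₂, hC₁, hC₂, ?_⟩
  intro ρ θ θbar Mbar u B BB hρ hθ hθb hθbΘ hBB hM
  set E := (1 / 2) * ρ * ‖u‖ ^ 2 + ε ρ θ + (1 / 2) * ‖B‖ ^ 2 with hE
  clear_value E
  have hεb := hε ρ θ hρ hθ
  have hσ0 := (hσ ρ θ hρ hθ).1
  have hσb := (hσ ρ θ hρ hθ).2
  have hEb : c₀ * (ρ ^ ((5 : ℝ) / 3) + θ ^ 4) + (1/2) * ‖B‖ ^ 2 ≤ E := by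
    have : (0:ℝ) ≤ (1/2) * ρ * ‖u‖ ^ 2 := by positivity
    rw [hE]; linarith
  have hE0 : (0:ℝ) ≤ E := by
    have h1 : (0:ℝ) ≤ c₀ * (ρ ^ ((5 : ℝ) / 3) + θ ^ 4) := by
      have := Real.rpow_nonneg hρ.le ((5:ℝ)/3)
      positivity
    have h2 : (0:ℝ) ≤ (1/2) * ‖B‖ ^ 2 := by positivity
    linarith
  -- bound on the entropy term
  have hlogθ : max 0 (Real.log θ) ≤ θ := by
    apply max_le hθ.le
    linarith [Real.log_le_sub_one_of_pos hθ]
  have hσθ : θbar * σ ρ θ ≤ Θ * c₁ * (1 + θ ^ 3 + ρ + ρ * θ) := by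
    have h1 : θbar * σ ρ θ ≤ Θ * σ ρ θ := mul_le_mul_of_nonneg_right hθbΘ hσ0
    have h2 : c₁ * (1 + θ ^ 3 + ρ + ρ * max 0 (Real.log θ))
        ≤ c₁ * (1 + θ ^ 3 + ρ + ρ * θ) := by
      apply mul_le_mul_of_nonneg_left _ hc₁.le
      have := mul_le_mul_of_nonneg_left hlogθ hρ.le
      linarith
    have h3 : Θ * σ ρ θ ≤ Θ * (c₁ * (1 + θ ^ 3 + ρ + ρ * θ)) :=
      mul_le_mul_of_nonneg_left (hσb.trans h2) hΘ.le
    calc θbar * σ ρ θ ≤ Θ * σ ρ θ := h1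
      _ ≤ Θ * (c₁ * (1 + θ ^ 3 + ρ + ρ * θ)) := h3
      _ = Θ * c₁ * (1 + θ ^ 3 + ρ + ρ * θ) := by ring
  have hσθ0 : 0 ≤ θbar * σ ρ θ := mul_nonneg hθb.le hσ0
  -- bound on the magnetic coupling term
  have hinner : |@inner ℝ _ _ BB B| ≤ β * ‖B‖ := by
    calc |@inner ℝ _ _ BB B| ≤ ‖BB‖ * ‖B‖ := abs_real_inner_le_norm BB B
      _ ≤ β * ‖B‖ := mul_le_mul_of_nonneg_right hBB (norm_nonneg _)
  -- bound on the potential term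
  have hMb : |ρ * Mbar| ≤ μ * ρ := by
    rw [abs_mul, abs_of_pos hρ]
    calc ρ * |Mbar| ≤ ρ * μ := mul_le_mul_of_nonneg_left hM hρ.le
      _ = μ * ρ := by ring
  have hB0 : (0:ℝ) ≤ ‖B‖ := norm_nonneg _
  -- total perturbation bounds
  have key : ∀ δ Cδ : ℝ, 0 < δ →
      (∀ ρ' θ' x : ℝ, 0 < ρ' → 0 < θ' → 0 ≤ x →
        Θ * c₁ * (1 + θ' ^ 3 + ρ' + ρ' * θ') + β * x + μ * ρ' ≤
          δ * (c₀ * (ρ' ^ ((5 : ℝ) / 3) + θ' ^ 4) + (1/2) * x ^ 2) + Cδ) →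
      θbar * σ ρ θ + |@inner ℝ _ _ BB B| + |ρ * Mbar| ≤ δ * E + Cδ := by
    intro δ Cδ hδ hP
    have h := hP ρ θ ‖B‖ hρ hθ hB0
    have h2 : δ * (c₀ * (ρ ^ ((5 : ℝ) / 3) + θ ^ 4) + (1/2) * ‖B‖ ^ 2) ≤ δ * E :=
      mul_le_mul_of_nonneg_left hEb hδ.le
    have := hσθ
    have := hinner
    have := hMb
    linarith
  have k1 := key _ C₁ hδ₁ hP₁
  have k2 := key _ C₂ hδ₂ hP₂
  have hi1 : @inner ℝ _ _ BB B ≤ |@inner ℝ _ _ BB B| := le_abs_self _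
  have hi2 : -(@inner ℝ _ _ BB B) ≤ |@inner ℝ _ _ BB B| := neg_le_abs _
  have hm1 : ρ * Mbar ≤ |ρ * Mbar| := le_abs_self _
  have hm2 : -(ρ * Mbar) ≤ |ρ * Mbar| := neg_le_abs _
  have habs0 : (0:ℝ) ≤ |@inner ℝ _ _ BB B| := abs_nonneg _
  have habs1 : (0:ℝ) ≤ |ρ * Mbar| := abs_nonneg _
  constructor
  · -- lower bound
    have : θbar * σ ρ θ + @inner ℝ _ _ BB B + ρ * Mbar ≤ (1 - lam⁻¹) * E + C₁ := by
      linarith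
    linarith [this]
  · -- upper bound
    have : -(θbar * σ ρ θ) - @inner ℝ _ _ BB B - ρ * Mbar ≤ (lam - 1) * E + C₂ := by
      linarith
    linarith [this]
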